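/- Let F be continuous on [a,b] and differentiable on (a,b), with least concave majorant F̂. Let M = max F, D = {x : F(x) = M}, and C = [c1,c2] the smallest closed interval containing D. If y ∈ (a,c1) and F'(y) ≤ 0, then F(y) ≠ F̂(y); likewise, if y ∈ (c2,b) and F'(y) ≥ 0, then F(y) ≠ F̂(y). -/
import Mathlib


open Set

/-- The least concave majorant of `F` on `[a, b]`. -/
noncomputable def leastConcaveMajorant (a b : ℝ) (F : ℝ → ℝ) (x : ℝ) : ℝ :=
  sInf {y : ℝ | ∃ G : ℝ → ℝ, ConcaveOn ℝ (Set.Icc a b) G ∧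
    (∀ z ∈ Set.Icc a b, F z ≤ G z) ∧ y = G x}

lemma lcm_mem_aux (a b : ℝ) (F : ℝ → ℝ) {M : ℝ} (hM : ∀ x ∈ Set.Icc a b, F x ≤ M) (x : ℝ) :
    M ∈ {y : ℝ | ∃ G : ℝ → ℝ, ConcaveOn ℝ (Set.Icc a b) G ∧
      (∀ z ∈ Set.Icc a b, F z ≤ G z) ∧ y = G x} :=
  ⟨fun _ => M, concaveOn_const M (convex_Icc a b), hM, rfl⟩

lemma lcm_bddBelow (a b : ℝ) (F : ℝ → ℝ) {x : ℝ} (hx : x ∈ Set.Icc a b) :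
    BddBelow {y : ℝ | ∃ G : ℝ → ℝ, ConcaveOn ℝ (Set.Icc a b) G ∧
      (∀ z ∈ Set.Icc a b, F z ≤ G z) ∧ y = G x} := by
  refine ⟨F x, ?_⟩
  rintro u ⟨G, hG, hGF, rfl⟩
  exact hGF x hx

lemma le_lcm (a b : ℝ) (F : ℝ → ℝ) {M : ℝ} (hM : ∀ x ∈ Set.Icc a b, F x ≤ M)
    {x : ℝ} (hx : x ∈ Set.Icc a b) : F x ≤ leastConcaveMajorant a b F x := by
  refine le_csInf ⟨M, lcm_mem_aux a b F hM x⟩ ?_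
  rintro u ⟨G, hG, hGF, rfl⟩
  exact hGF x hx

lemma lcm_le (a b : ℝ) (F : ℝ → ℝ) {M : ℝ} (hM : ∀ x ∈ Set.Icc a b, F x ≤ M)
    {x : ℝ} (hx : x ∈ Set.Icc a b) : leastConcaveMajorant a b F x ≤ M :=
  csInf_le (lcm_bddBelow a b F hx) (lcm_mem_aux a b F hM x)

lemma lcm_concave (a b : ℝ) (F : ℝ → ℝ) {M : ℝ} (hM : ∀ x ∈ Set.Icc a b, F x ≤ M) :
    ConcaveOn ℝ (Set.Icc a b) (leastConcaveMajorant a b F) := by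
  refine ⟨convex_Icc a b, fun x hx z hz u v hu hv huv => ?_⟩
  have hp : u • x + v • z ∈ Set.Icc a b := (convex_Icc a b) hx hz hu hv huv
  refine le_csInf ⟨M, lcm_mem_aux a b F hM _⟩ ?_
  rintro w ⟨G, hG, hGF, rfl⟩
  have h1 : leastConcaveMajorant a b F x ≤ G x :=
    csInf_le (lcm_bddBelow a b F hx) ⟨G, hG, hGF, rfl⟩
  have h2 : leastConcaveMajorant a b F z ≤ G z :=
    csInf_le (lcm_bddBelow a b F hz) ⟨G, hG, hGF, rfl⟩
  calc u • leastConcaveMajorant a b F x + v • leastConcaveMajorant a b F z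
      ≤ u • G x + v • G z := by
        simp only [smul_eq_mul]
        exact add_le_add (mul_le_mul_of_nonneg_left h1 hu) (mul_le_mul_of_nonneg_left h2 hv)
    _ ≤ G (u • x + v • z) := hG.2 hx hz hu hv huv

theorem stmt7 (a b : ℝ) (hab : a < b) (F : ℝ → ℝ)
    (hF : ContinuousOn F (Set.Icc a b))
    (hFdiff : ∀ x ∈ Set.Ioo a b, DifferentiableAt ℝ F x)
    (M : ℝ) (hM : ∀ x ∈ Set.Icc a b, F x ≤ M)
    (D : Set ℝ) (hD : D = {x ∈ Set.Icc a b | F x = M}) (hDne : D.Nonempty)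
    (c1 c2 : ℝ) (hc1 : c1 = sInf D) (hc2 : c2 = sSup D) :
    (∀ y ∈ Set.Ioo a c1, deriv F y ≤ 0 → F y ≠ leastConcaveMajorant a b F y) ∧
    (∀ y ∈ Set.Ioo c2 b, 0 ≤ deriv F y → F y ≠ leastConcaveMajorant a b F y) := by
  set L := leastConcaveMajorant a b F with hL
  have hDsub : D ⊆ Set.Icc a b := by rw [hD]; exact fun x hx => hx.1
  obtain ⟨d, hd⟩ := hDne
  have hdIcc : d ∈ Set.Icc a b := hDsub hd
  have hbddB : BddBelow D := BddBelow.mono hDsub bddBelow_Icc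
  have hbddA : BddAbove D := BddAbove.mono hDsub bddAbove_Icc
  have hFd : F d = M := by rw [hD] at hd; exact hd.2
  have hLd : L d = M :=
    le_antisymm (lcm_le a b F hM hdIcc) (hFd ▸ le_lcm a b F hM hdIcc)
  have hconc : ConcaveOn ℝ (Set.Icc a b) L := lcm_concave a b F hM
  constructor
  · rintro y ⟨hay, hyc1⟩ hderiv heq
    have hyd : y < d := lt_of_lt_of_le hyc1 (hc1 ▸ csInf_le hbddB hd)
    have hyab : y ∈ Set.Ioo a b := ⟨hay, hyd.trans_le hdIcc.2⟩
    have hyIcc : y ∈ Set.Icc a b := ⟨hay.le, hyab.2.le⟩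
    have hFyM : F y < M := by
      refine lt_of_le_of_ne (hM y hyIcc) (fun h => absurd ?_ (not_le.2 hyc1))
      exact hc1 ▸ csInf_le hbddB (by rw [hD]; exact ⟨hyIcc, h⟩)
    set s : ℝ := (M - F y) / (d - y) with hs
    have hspos : 0 < s := div_pos (by linarith) (by linarith)
    have key : ∀ t ∈ Set.Ioo a y, s ≤ (F t - F y) / (t - y) := by
      intro t ht
      obtain ⟨hta, hty⟩ := ht
      have htIcc : t ∈ Set.Icc a b := ⟨hta.le, (hty.trans hyab.2).le⟩
      have hslope := hconc.slope_anti_adjacent htIcc hdIcc hty hyd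
      -- hslope : (L d - L y)/(d - y) ≤ (L y - L t)/(y - t)
      have h1 : s ≤ (L y - L t) / (y - t) := by
        rw [hs, heq, ← hLd]; exact hslope
      have h2 : F t ≤ L t := le_lcm a b F hM htIcc
      have h3 : s * (y - t) ≤ L y - L t :=
        (le_div_iff₀ (by linarith : (0:ℝ) < y - t)).mp h1
      rw [le_div_iff_of_neg (by linarith : t - y < 0)]
      have h4 : s * (t - y) = -(s * (y - t)) := by ring
      rw [heq] at *
      linarith
    have hdF : HasDerivAt F (deriv F y) y := (hFdiff y hyab).hasDerivAt
    have htend : Filter.Tendsto (slope F y) (nhdsWithin y (Set.Iio y)) (nhds (deriv F y)) :=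
      (hasDerivAt_iff_tendsto_slope.mp hdF).mono_left
        (nhdsWithin_mono y (fun t ht => ne_of_lt ht))
    have hge : s ≤ deriv F y := by
      refine ge_of_tendsto htend ?_
      filter_upwards [Ioo_mem_nhdsLT_of_mem (⟨hay, le_refl y⟩ : y ∈ Set.Ioc a y)] with t ht
      rw [slope_def_field]
      exact key t ht
    linarith
  · rintro y ⟨hc2y, hyb⟩ hderiv heq
    have hdy : d < y := lt_of_le_of_lt (hc2 ▸ le_csSup hbddA hd) hc2y
    have hyab : y ∈ Set.Ioo a b := ⟨hdIcc.1.trans_lt hdy, hyb⟩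
    have hyIcc : y ∈ Set.Icc a b := ⟨hyab.1.le, hyb.le⟩
    have hFyM : F y < M := by
      refine lt_of_le_of_ne (hM y hyIcc) (fun h => absurd ?_ (not_le.2 hc2y))
      exact hc2 ▸ le_csSup hbddA (by rw [hD]; exact ⟨hyIcc, h⟩)
    set s : ℝ := (F y - M) / (y - d) with hs
    have hsneg : s < 0 := div_neg_of_neg_of_pos (by linarith) (by linarith)
    have key : ∀ t ∈ Set.Ioo y b, (F t - F y) / (t - y) ≤ s := by
      intro t ht
      obtain ⟨hyt, htb⟩ := ht
      have htIcc : t ∈ Set.Icc a b := ⟨(hyab.1.trans hyt).le, htb.le⟩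
      have hslope := hconc.slope_anti_adjacent hdIcc htIcc hdy hyt
      -- hslope : (L t - L y)/(t - y) ≤ (L y - L d)/(y - d)
      have h1 : (L t - L y) / (t - y) ≤ s := by
        rw [hs, heq, ← hLd]; exact hslope
      have h2 : F t ≤ L t := le_lcm a b F hM htIcc
      have h3 : L t - L y ≤ s * (t - y) :=
        (div_le_iff₀ (by linarith : (0:ℝ) < t - y)).mp h1
      rw [div_le_iff₀ (by linarith : (0:ℝ) < t - y)]
      rw [heq] at *
      linarith
    have hdF : HasDerivAt F (deriv F y) y := (hFdiff y hyab).hasDerivAt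
    have htend : Filter.Tendsto (slope F y) (nhdsWithin y (Set.Ioi y)) (nhds (deriv F y)) :=
      (hasDerivAt_iff_tendsto_slope.mp hdF).mono_left
        (nhdsWithin_mono y (fun t ht => ne_of_gt ht))
    have hle : deriv F y ≤ s := by
      refine le_of_tendsto htend ?_
      filter_upwards [Ioo_mem_nhdsGT_of_mem (⟨le_refl y, hyb⟩ : y ∈ Set.Ico y b)] with t ht
      rw [slope_def_field]
      exact key t ht
    linarith
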